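/- Let S be a multiset of n permutations of [d] with optimal 1-median σ* and OPT = Σ_{x∈S} |I_x| where I_x is the misaligned symbol set of x (so Δ(x, σ*) = |I_x|). Let F̄ = {x ∈ S : (1−α)OPT/n ≤ |I_x| ≤ (1+α)OPT/n} and fix x_j ∈ F̄. Let R = {x_i ∈ F̄ : |I_{x_i} ∩ I_{x_j}| > ε|I_{x_j}|}. Then Σ_{x_i ∈ R} Δ(x_i, x_j) ≤ (2 − ε(1 + 3α − 3α/ε)) · Σ_{x_i ∈ R} Δ(x_i, σ*), provided 0 < α ≤ 1/3. -/

import Mathlib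

/-- Length of the longest common subsequence of `x` and `y`. -/
def lcsLen {α : Type*} [DecidableEq α] (x y : List α) : ℕ :=
  (((x.sublists.filter fun l => decide (l.Sublist y)).map List.length).foldr max 0)

lemma mem_le_foldr_max (L : List ℕ) (a : ℕ) (ha : a ∈ L) : a ≤ L.foldr max 0 := by
  induction L with
  | nil => simp at ha
  | cons b t ih =>
    rcases List.mem_cons.mp ha with h | h
    · simp [h, le_max_iff]
    · simp [le_max_iff, ih h]

lemma le_lcsLen {α : Type*} [DecidableEq α] {x y l : List α} (hx : l.Sublist x)
    (hy : l.Sublist y) : l.length ≤ lcsLen x y := by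
  apply mem_le_foldr_max
  simp only [List.mem_map]
  exact ⟨l, by simp [List.mem_filter, List.mem_sublists, hx, hy], rfl⟩

lemma ulam_bound (d : ℕ) (σs : List (Fin d)) (hsnd : σs.Nodup) (hsl : σs.length = d)
    (x y : List (Fin d)) (Ux Uy : Finset (Fin d))
    (hx : x.filter (fun a => decide (a ∉ Ux)) = σs.filter (fun a => decide (a ∉ Ux)))
    (hy : y.filter (fun a => decide (a ∉ Uy)) = σs.filter (fun a => decide (a ∉ Uy))) :
    d - lcsLen x y ≤ (Ux ∪ Uy).card := by
  set l := σs.filter (fun a => decide (a ∉ Ux ∪ Uy)) with hl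
  have hlx : l.Sublist x := by
    have : l = (x.filter (fun a => decide (a ∉ Ux))).filter (fun a => decide (a ∉ Uy)) := by
      rw [hx, List.filter_filter, hl]
      apply List.filter_congr
      intro a _
      rw [← Bool.decide_and, decide_eq_decide]
      simp only [Finset.mem_union]
      tauto
    rw [this]
    exact (List.filter_sublist.trans List.filter_sublist)
  have hly : l.Sublist y := by
    have : l = (y.filter (fun a => decide (a ∉ Uy))).filter (fun a => decide (a ∉ Ux)) := by
      rw [hy, List.filter_filter, hl]
      apply List.filter_congr
      intro a _
      rw [← Bool.decide_and, decide_eq_decide]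
      simp only [Finset.mem_union]
      tauto
    rw [this]
    exact (List.filter_sublist.trans List.filter_sublist)
  have huniv : σs.toFinset = Finset.univ := by
    apply Finset.eq_univ_of_card
    rw [List.toFinset_card_of_nodup hsnd, hsl, Fintype.card_fin]
  have haσ : ∀ a : Fin d, a ∈ σs := fun a => by
    rw [← List.mem_toFinset, huniv]; exact Finset.mem_univ a
  have hlen : l.length = d - (Ux ∪ Uy).card := by
    have hnd : l.Nodup := hsnd.filter _
    have : l.toFinset = (Ux ∪ Uy)ᶜ := by
      ext a
      simp [hl, List.mem_filter, haσ, decide_eq_true_eq]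
    calc l.length = l.toFinset.card := (List.toFinset_card_of_nodup hnd).symm
    _ = _ := by rw [this, Finset.card_compl, Fintype.card_fin]
  have := le_lcsLen hlx hly
  omega

open scoped Classical in
/-- Cost bound for a ball `R` around `x_j` in the middle band `F̄` (Ulam metric):
`Σ_{x ∈ R} Δ(x, x_j) ≤ (2 - ε(1 + 3α - 3α/ε)) · Σ_{x ∈ R} Δ(x, σ*)`. -/
theorem stmt_14 (d : ℕ) (S : Multiset (List (Fin d))) (σs : List (Fin d))
    (hperm : ∀ x ∈ S, x.Nodup ∧ x.length = d) (hsnd : σs.Nodup) (hsl : σs.length = d)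
    (Ix : List (Fin d) → Finset (Fin d))
    -- removing the symbols of `Ix x` aligns `x` with `σ*`
    (halign : ∀ x ∈ S,
      x.filter (fun a => decide (a ∉ Ix x)) = σs.filter (fun a => decide (a ∉ Ix x)))
    -- `Δ(x, σ*) = |I_x|`
    (hdist : ∀ x ∈ S, d - lcsLen x σs = (Ix x).card)
    (α ε : ℝ) (hα0 : 0 < α) (hα1 : α ≤ 1 / 3) (hε : 0 < ε)
    (xj : List (Fin d))
    -- `x_j` belongs to the middle band `F̄`
    (hxj : xj ∈ S.filter fun x =>
      (1 - α) * ((S.map fun y => ((Ix y).card : ℝ)).sum / (Multiset.card S : ℝ)) ≤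
          ((Ix x).card : ℝ) ∧
        ((Ix x).card : ℝ) ≤
          (1 + α) * ((S.map fun y => ((Ix y).card : ℝ)).sum / (Multiset.card S : ℝ))) :
    -- the ball R = B(x_j, ε) inside F̄
    ((((S.filter fun x =>
      (1 - α) * ((S.map fun y => ((Ix y).card : ℝ)).sum / (Multiset.card S : ℝ)) ≤
          ((Ix x).card : ℝ) ∧
        ((Ix x).card : ℝ) ≤
          (1 + α) * ((S.map fun y => ((Ix y).card : ℝ)).sum / (Multiset.card S : ℝ))).filter
        fun x => ε * ((Ix xj).card : ℝ) < ((Ix x ∩ Ix xj).card : ℝ)).map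
          fun x => ((d - lcsLen x xj : ℕ) : ℝ)).sum) ≤
      (2 - ε * (1 + 3 * α - 3 * α / ε)) *
        ((((S.filter fun x =>
          (1 - α) * ((S.map fun y => ((Ix y).card : ℝ)).sum / (Multiset.card S : ℝ)) ≤
              ((Ix x).card : ℝ) ∧
            ((Ix x).card : ℝ) ≤
              (1 + α) * ((S.map fun y => ((Ix y).card : ℝ)).sum / (Multiset.card S : ℝ))).filter
            fun x => ε * ((Ix xj).card : ℝ) < ((Ix x ∩ Ix xj).card : ℝ)).map
              fun x => (((Ix x).card : ℕ) : ℝ)).sum) := by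
  set M : ℝ := (S.map fun y => ((Ix y).card : ℝ)).sum / (Multiset.card S : ℝ) with hM
  have hM0 : 0 ≤ M := by
    apply div_nonneg _ (Nat.cast_nonneg _)
    exact Multiset.sum_nonneg (by
      intro z hz
      obtain ⟨y, _, rfl⟩ := Multiset.mem_map.mp hz
      positivity)
  rw [← Multiset.sum_map_mul_left]
  apply Multiset.sum_map_le_sum_map
  intro x hx
  rw [Multiset.mem_filter] at hx
  obtain ⟨hxF, hball⟩ := hx
  rw [Multiset.mem_filter] at hxF hxj
  have hxS := hxF.1
  have hx1 := hxF.2.1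
  have hx2 := hxF.2.2
  have hjS := hxj.1
  have hj1 := hxj.2.1
  have hj2 := hxj.2.2
  -- strengthened triangle inequality
  have hkey : d - lcsLen x xj ≤ (Ix x ∪ Ix xj).card :=
    ulam_bound d σs hsnd hsl x xj (Ix x) (Ix xj) (halign x hxS) (halign xj hjS)
  have hcardU : ((Ix x ∪ Ix xj).card : ℝ)
      = ((Ix x).card : ℝ) + ((Ix xj).card : ℝ) - ((Ix x ∩ Ix xj).card : ℝ) := by
    have h := Finset.card_union_add_card_inter (Ix x) (Ix xj)
    have : ((Ix x ∪ Ix xj).card : ℝ) + ((Ix x ∩ Ix xj).card : ℝ)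
        = ((Ix x).card : ℝ) + ((Ix xj).card : ℝ) := by exact_mod_cast h
    linarith
  have hkeyR : ((d - lcsLen x xj : ℕ) : ℝ)
      ≤ ((Ix x).card : ℝ) + ((Ix xj).card : ℝ) - ((Ix x ∩ Ix xj).card : ℝ) := by
    rw [← hcardU]; exact_mod_cast hkey
  have hinter_le : ((Ix x ∩ Ix xj).card : ℝ) ≤ ((Ix xj).card : ℝ) := by
    exact_mod_cast Finset.card_le_card (Finset.inter_subset_right)
  have hε1 : ε ≤ 1 := by
    by_contra h
    push_neg at h
    have hj0 : (0:ℝ) ≤ ((Ix xj).card : ℝ) := Nat.cast_nonneg _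
    nlinarith
  have hcoef : ε * (1 + 3 * α - 3 * α / ε) = ε + 3*α*ε - 3*α := by
    field_simp
  rw [hcoef]
  have hj_le : ((Ix xj).card : ℝ) ≤ (1+3*α) * ((Ix x).card : ℝ) := by
    nlinarith [mul_nonneg (mul_nonneg (mul_nonneg hα0.le
      (by linarith : (0:ℝ) ≤ 1-α)) (by linarith : (0:ℝ) ≤ 1-3*α)) hM0]
  have h5 : ε * ((Ix xj).card : ℝ) ≤ ((Ix x ∩ Ix xj).card : ℝ) := le_of_lt hball
  push_cast
  nlinarith [mul_nonneg (by linarith : (0:ℝ) ≤ 1-ε) (sub_nonneg.mpr hj_le)]
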